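/- arXiv:1001.0318 — 4 statements merged into one kernel-verified Lean document; each statement's English description precedes it below -/
import Mathlib

section
/- If a locally finite Borel measure μ on ℝⁿ satisfies a power law with exponent δ > n−1 (i.e., c₁ρ^δ ≤ μ(B(x,ρ)) ≤ c₂ρ^δ for all x ∈ supp μ and 0 < ρ < ρ₀), then μ is (C, δ−n+1)-absolutely decaying for some constant C > 0. -/
open MeasureTheory Metric Set Filter RealInnerProductSpace
open scoped ENNReal NNReal

/-- The (topological) support of a measure on `ℝⁿ`. -/
def measSupport {n : ℕ} (μ : Measure (EuclideanSpace ℝ (Fin n))) :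
    Set (EuclideanSpace ℝ (Fin n)) :=
  {x | ∀ ρ : ℝ, 0 < ρ → 0 < μ (ball x ρ)}

/-- An affine hyperplane in `ℝⁿ`. -/
def IsAffineHyperplane {n : ℕ} (L : Set (EuclideanSpace ℝ (Fin n))) : Prop :=
  ∃ (u : EuclideanSpace ℝ (Fin n)) (b : ℝ), u ≠ 0 ∧ L = {x | ⟪u, x⟫ = b}

/-- `μ` is `(C,γ)`-absolutely decaying with threshold `ρ₀`. -/
def AbsolutelyDecaying {n : ℕ} (μ : Measure (EuclideanSpace ℝ (Fin n)))
    (C γ ρ₀ : ℝ) : Prop :=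
  ∀ L : Set (EuclideanSpace ℝ (Fin n)), IsAffineHyperplane L →
    ∀ x ∈ measSupport μ, ∀ ρ : ℝ, 0 < ρ → ρ < ρ₀ → ∀ ε : ℝ, 0 < ε →
      μ (closedBall x ρ ∩ cthickening ε L) <
        ENNReal.ofReal (C * (ε / ρ) ^ γ) * μ (closedBall x ρ)

lemma slab_subset {n : ℕ} (u : EuclideanSpace ℝ (Fin n)) (b ε : ℝ) (hu : u ≠ 0) (hε : 0 < ε) :
    cthickening ε {x : EuclideanSpace ℝ (Fin n) | ⟪u, x⟫ = b} ⊆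
      {y | |⟪(‖u‖⁻¹ • u : EuclideanSpace ℝ (Fin n)), y⟫ - ‖u‖⁻¹ * b| ≤ ε} := by
  intro y hy
  have hune : (0:ℝ) < ‖u‖ := norm_pos_iff.mpr hu
  have key : ∀ z ∈ {x : EuclideanSpace ℝ (Fin n) | ⟪u, x⟫ = b},
      |⟪(‖u‖⁻¹ • u : EuclideanSpace ℝ (Fin n)), y⟫ - ‖u‖⁻¹ * b| ≤ dist y z := by
    intro z hz
    have hz' : ⟪u, z⟫ = b := hz
    have h0 : ⟪(‖u‖⁻¹ • u : EuclideanSpace ℝ (Fin n)), y⟫ - ‖u‖⁻¹ * b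
        = ⟪(‖u‖⁻¹ • u : EuclideanSpace ℝ (Fin n)), y - z⟫ := by
      rw [inner_sub_right, real_inner_smul_left, real_inner_smul_left, hz']
    rw [h0]
    calc |⟪(‖u‖⁻¹ • u : EuclideanSpace ℝ (Fin n)), y - z⟫|
        ≤ ‖(‖u‖⁻¹ • u : EuclideanSpace ℝ (Fin n))‖ * ‖y - z‖ := abs_real_inner_le_norm _ _
      _ = ‖y - z‖ := by rw [norm_smul, norm_inv, norm_norm, inv_mul_cancel₀ hune.ne']; ring
      _ = dist y z := (dist_eq_norm _ _).symm
  rw [mem_cthickening_iff] at hy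
  have h2 : ENNReal.ofReal |⟪(‖u‖⁻¹ • u : EuclideanSpace ℝ (Fin n)), y⟫ - ‖u‖⁻¹ * b| ≤
      ENNReal.ofReal ε := by
    refine le_trans ?_ hy
    rw [EMetric.le_infEdist]
    intro z hz
    rw [edist_dist]
    exact ENNReal.ofReal_le_ofReal (key z hz)
  exact (ENNReal.ofReal_le_ofReal_iff hε.le).mp h2

lemma measSupport_compl_null {n : ℕ} (μ : Measure (EuclideanSpace ℝ (Fin n)))
    [IsLocallyFiniteMeasure μ] : μ (measSupport μ)ᶜ = 0 := by
  refine measure_null_of_locally_null _ fun x hx => ?_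
  simp only [measSupport, mem_compl_iff, mem_setOf_eq, not_forall, not_lt] at hx
  obtain ⟨ρ, hρ, h⟩ := hx
  exact ⟨ball x ρ, mem_nhdsWithin_of_mem_nhds (ball_mem_nhds x hρ), le_antisymm h zero_le⟩

lemma coord_abs_le_norm {n : ℕ} (z : EuclideanSpace ℝ (Fin n)) (i : Fin n) : |z i| ≤ ‖z‖ := by
  rw [EuclideanSpace.norm_eq]
  have h1 : |z i| = Real.sqrt (‖z i‖ ^ 2) := by
    rw [Real.sqrt_sq_eq_abs, Real.norm_eq_abs, abs_abs]
  rw [h1]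
  apply Real.sqrt_le_sqrt
  exact Finset.single_le_sum (f := fun j => ‖z j‖ ^ 2) (fun j _ => sq_nonneg _) (Finset.mem_univ i)

/-- a power law with exponent `δ > n - 1` implies
`(C, δ - n + 1)`-absolute decay for some `C > 0`. -/
theorem absolutelyDecaying_of_powerLaw {n : ℕ}
    (μ : Measure (EuclideanSpace ℝ (Fin n))) [IsLocallyFiniteMeasure μ]
    (δ c₁ c₂ ρ₀ : ℝ) (hδ : (n : ℝ) - 1 < δ) (hc₁ : 0 < c₁) (hc₂ : 0 < c₂)
    (hρ₀ : 0 < ρ₀)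
    (hpl : ∀ x ∈ measSupport μ, ∀ ρ : ℝ, 0 < ρ → ρ < ρ₀ →
      ENNReal.ofReal (c₁ * ρ ^ δ) ≤ μ (closedBall x ρ) ∧
        μ (closedBall x ρ) ≤ ENNReal.ofReal (c₂ * ρ ^ δ)) :
    ∃ C : ℝ, 0 < C ∧ ∃ ρ₀' : ℝ, 0 < ρ₀' ∧
      AbsolutelyDecaying μ C (δ - n + 1) ρ₀' := by
  classical
  rcases Nat.eq_zero_or_pos n with hn | hn
  · subst hn
    refine ⟨1, one_pos, 1, one_pos, ?_⟩
    rintro L ⟨u, b, hu, -⟩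
    exact absurd (Subsingleton.elim u 0) hu
  haveI : Nontrivial (EuclideanSpace ℝ (Fin n)) :=
    Module.nontrivial_of_finrank_pos (R := ℝ) (by rw [finrank_euclideanSpace_fin]; exact hn)
  set v : ℝ≥0∞ := volume (ball (0 : EuclideanSpace ℝ (Fin n)) 1) with hv
  have hv0 : v ≠ 0 := (measure_ball_pos _ _ one_pos).ne'
  have hvt : v ≠ ⊤ := measure_ball_lt_top.ne
  obtain ⟨vr, hvr⟩ : ∃ vr : ℝ, vr = v.toReal := ⟨_, rfl⟩
  have hvrpos : 0 < vr := hvr ▸ ENNReal.toReal_pos hv0 hvt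
  obtain ⟨K, hKdef⟩ : ∃ K : ℝ, K = 4 * 4 ^ (n - 1) * 2 ^ n / vr := ⟨_, rfl⟩
  have hK : 0 < K := by rw [hKdef]; positivity
  obtain ⟨C, hCdef⟩ : ∃ C : ℝ, C = max 1 (K * c₂ / c₁) + 1 := ⟨_, rfl⟩
  have hC1 : (1:ℝ) < C := by
    have := le_max_left 1 (K * c₂ / c₁); rw [hCdef]; linarith
  have hCK : K * c₂ / c₁ < C := by
    have := le_max_right 1 (K * c₂ / c₁); rw [hCdef]; linarith
  refine ⟨C, by linarith, ρ₀, hρ₀, ?_⟩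
  obtain ⟨γ, hγdef⟩ : ∃ γ : ℝ, γ = δ - n + 1 := ⟨_, rfl⟩
  rw [show AbsolutelyDecaying μ C (δ - ↑n + 1) ρ₀ = AbsolutelyDecaying μ C γ ρ₀ by rw [hγdef]]
  have hγ0 : 0 < γ := by rw [hγdef]; linarith
  rintro L ⟨u, b, hu, rfl⟩ x hx ρ hρ hρρ₀ ε hε
  obtain ⟨hB1, hB2⟩ := hpl x hx ρ hρ hρρ₀
  have hBpos : 0 < μ (closedBall x ρ) :=
    lt_of_lt_of_le (hx ρ hρ) (measure_mono ball_subset_closedBall)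
  have hBfin : μ (closedBall x ρ) ≠ ⊤ := (lt_of_le_of_lt hB2 ENNReal.ofReal_lt_top).ne
  have hεργ : 0 < (ε / ρ) ^ γ := Real.rpow_pos_of_pos (div_pos hε hρ) γ
  rcases le_or_gt ρ ε with hcase | hcase
  · -- trivial case ρ ≤ ε
    have h1 : (1:ℝ) ≤ (ε/ρ)^γ :=
      Real.one_le_rpow ((one_le_div hρ).mpr hcase) hγ0.le
    calc μ (closedBall x ρ ∩ cthickening ε {x | ⟪u, x⟫ = b})
        ≤ μ (closedBall x ρ) := measure_mono inter_subset_left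
      _ = 1 * μ (closedBall x ρ) := (one_mul _).symm
      _ < ENNReal.ofReal (C * (ε / ρ) ^ γ) * μ (closedBall x ρ) := by
          refine (ENNReal.mul_lt_mul_iff_left hBpos.ne' hBfin).mpr ?_
          rw [← ENNReal.ofReal_one]
          exact ENNReal.ofReal_lt_ofReal_iff_of_nonneg zero_le_one |>.mpr
            (by
              have h2 : C * 1 ≤ C * ((ε / ρ) ^ γ) :=
                mul_le_mul_of_nonneg_left h1 (by linarith)
              rw [mul_one] at h2
              linarith)
  · -- main case ε < ρ
    have hερ₀ : ε < ρ₀ := hcase.trans hρρ₀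
    have hune : (0:ℝ) < ‖u‖ := norm_pos_iff.mpr hu
    obtain ⟨u₁, hu₁def⟩ : ∃ w : EuclideanSpace ℝ (Fin n), w = ‖u‖⁻¹ • u := ⟨_, rfl⟩
    obtain ⟨b₁, hb₁def⟩ : ∃ r : ℝ, r = ‖u‖⁻¹ * b := ⟨_, rfl⟩
    have hu₁norm : ‖u₁‖ = 1 := by
      rw [hu₁def, norm_smul, norm_inv, norm_norm, inv_mul_cancel₀ hune.ne']
    have hslab : cthickening ε {x | ⟪u, x⟫ = b} ⊆ {y | |⟪u₁, y⟫ - b₁| ≤ ε} := by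
      rw [hu₁def, hb₁def]; exact slab_subset u b ε hu hε
    set S := closedBall x ρ ∩ cthickening ε {x | ⟪u, x⟫ = b} with hSdef
    set T := S ∩ measSupport μ with hTdef
    -- maximal ε-separated subset of T
    obtain ⟨Y, hYmax⟩ := zorn_subset
        {Y | Y ⊆ T ∧ Y.Pairwise fun a c => ε ≤ dist a c} (by
      intro c hc hchain
      refine ⟨⋃₀ c, ⟨sUnion_subset fun s hs => (hc hs).1, ?_⟩,
        fun s hs => subset_sUnion_of_mem hs⟩
      intro a ha b' hb' hab
      obtain ⟨s, hsc, has⟩ := ha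
      obtain ⟨t, htc, hbt⟩ := hb'
      rcases hchain.total hsc htc with h | h
      · exact (hc htc).2 (h has) hbt hab
      · exact (hc hsc).2 has (h hbt) hab)
    have hYT : Y ⊆ T := hYmax.1.1
    have hYsep : Y.Pairwise fun a c => ε ≤ dist a c := hYmax.1.2
    have hcover : T ⊆ ⋃ y ∈ Y, ball y ε := by
      intro z hz
      by_contra hzc
      simp only [mem_iUnion₂, mem_ball, not_exists, not_lt] at hzc
      have hins : insert z Y ∈ {Y | Y ⊆ T ∧ Y.Pairwise fun a c => ε ≤ dist a c} := by
        refine ⟨insert_subset hz hYT, hYsep.insert fun y hy _ => ?_⟩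
        exact ⟨hzc y hy, by rw [dist_comm]; exact hzc y hy⟩
      have hsub := hYmax.2 hins (subset_insert z Y)
      have := hzc z (hsub (mem_insert z Y))
      rw [dist_self] at this
      linarith
    -- orthonormal basis with first vector u₁
    obtain ⟨i₀, hi₀⟩ : ∃ i : Fin n, i = ⟨0, hn⟩ := ⟨_, rfl⟩
    have horth : Orthonormal ℝ (({i₀} : Set (Fin n)).restrict fun _ : Fin n => u₁) := by
      refine ⟨fun i => hu₁norm, fun {i j} hij => ?_⟩
      exact absurd (Subtype.ext ((mem_singleton_iff.mp i.2).trans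
        (mem_singleton_iff.mp j.2).symm)) hij
    obtain ⟨bas, hbas⟩ := horth.exists_orthonormalBasis_extension_of_card_eq
      (by simp) 
    have hbase : bas i₀ = u₁ := hbas i₀ rfl
    have hrepr : ∀ w : EuclideanSpace ℝ (Fin n), bas.repr w i₀ = ⟪u₁, w⟫ := by
      intro w
      rw [bas.repr_apply_apply, hbase]
    have hreprcoord : ∀ w w' : EuclideanSpace ℝ (Fin n), ∀ i : Fin n,
        |bas.repr w i - bas.repr w' i| ≤ dist w w' := by
      intro w w' i
      have h1 : bas.repr w i - bas.repr w' i = (bas.repr w - bas.repr w') i := rfl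
      rw [h1]
      calc |(bas.repr w - bas.repr w') i| ≤ ‖bas.repr w - bas.repr w'‖ :=
            coord_abs_le_norm _ i
        _ = ‖bas.repr (w - w')‖ := by rw [map_sub]
        _ = ‖w - w'‖ := bas.repr.norm_map _
        _ = dist w w' := (dist_eq_norm _ _).symm
    -- the box
    obtain ⟨I, hIdef⟩ : ∃ I : Fin n → Set ℝ, I = fun i =>
        if i = i₀ then Icc (b₁ - 2*ε) (b₁ + 2*ε)
        else Icc (bas.repr x i - 2*ρ) (bas.repr x i + 2*ρ) := ⟨_, rfl⟩
    have hBoxMeas : MeasurableSet (univ.pi I) := by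
      refine MeasurableSet.univ_pi fun i => ?_
      rw [hIdef]; dsimp only; split_ifs <;> exact measurableSet_Icc
    have hvolBox : volume (univ.pi I) =
        ENNReal.ofReal (4*ε) * ENNReal.ofReal (4*ρ) ^ (n-1) := by
      rw [volume_pi_pi, ← Finset.mul_prod_erase Finset.univ _ (Finset.mem_univ i₀)]
      have h1 : volume (I i₀) = ENNReal.ofReal (4*ε) := by
        rw [hIdef]; dsimp only; rw [if_pos rfl, Real.volume_Icc]
        congr 1; ring
      have h2 : ∀ i ∈ Finset.univ.erase i₀, volume (I i) = ENNReal.ofReal (4*ρ) := by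
        intro i hi
        rw [hIdef]; dsimp only
        rw [if_neg (Finset.mem_erase.mp hi).1, Real.volume_Icc]
        congr 1; ring
      rw [h1, Finset.prod_congr rfl h2, Finset.prod_const,
        Finset.card_erase_of_mem (Finset.mem_univ i₀), Finset.card_univ, Fintype.card_fin]
    -- the map to coordinates
    have hmp : MeasurePreserving
        (fun w : EuclideanSpace ℝ (Fin n) => (MeasurableEquiv.toLp 2 (Fin n → ℝ)).symm (bas.repr w))
        volume volume :=
      (EuclideanSpace.volume_preserving_symm_measurableEquiv_toLp (Fin n)).comp
        bas.measurePreserving_repr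
    have hPhi : ∀ w : EuclideanSpace ℝ (Fin n), ∀ i : Fin n,
        (MeasurableEquiv.toLp 2 (Fin n → ℝ)).symm (bas.repr w) i = bas.repr w i := fun _ _ => rfl
    -- each small ball around a point of Y lands in the box preimage
    have hballsub : ∀ y ∈ Y, ball y (ε/2) ⊆
        (fun w : EuclideanSpace ℝ (Fin n) =>
          (MeasurableEquiv.toLp 2 (Fin n → ℝ)).symm (bas.repr w)) ⁻¹' (univ.pi I) := by
      intro y hy w hw
      have hyS : y ∈ S := (hYT hy).1
      have hyB : y ∈ closedBall x ρ := hyS.1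
      have hyslab : |⟪u₁, y⟫ - b₁| ≤ ε := hslab hyS.2
      have hwy : dist w y < ε/2 := mem_ball.mp hw
      simp only [mem_preimage, mem_univ_pi]
      intro i
      rw [hPhi, hIdef]
      dsimp only
      split_ifs with hii
      · subst hii
        rw [hrepr w]
        have h3 : |⟪u₁, w⟫ - ⟪u₁, y⟫| ≤ dist w y := by
          rw [← inner_sub_right]
          calc |⟪u₁, w - y⟫| ≤ ‖u₁‖ * ‖w - y‖ := abs_real_inner_le_norm _ _
            _ = dist w y := by rw [hu₁norm, one_mul, dist_eq_norm]
        have h4 : |⟪u₁, w⟫ - b₁| ≤ 2*ε := by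
          have := abs_sub_abs_le_abs_sub (⟪u₁, w⟫ - b₁) (⟪u₁, y⟫ - b₁)
          have h5 : |⟪u₁, w⟫ - b₁ - (⟪u₁, y⟫ - b₁)| = |⟪u₁, w⟫ - ⟪u₁, y⟫| := by ring_nf
          linarith [abs_sub_le (⟪u₁, w⟫) (⟪u₁, y⟫) b₁ ]
        constructor
        · linarith [abs_le.mp h4]
        · linarith [(abs_le.mp h4).2]
      · have h6 : dist w x ≤ 2*ρ := by
          calc dist w x ≤ dist w y + dist y x := dist_triangle _ _ _
            _ ≤ ε/2 + ρ := by
                have := mem_closedBall.mp hyB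
                linarith
            _ ≤ 2*ρ := by linarith
        have h7 := hreprcoord w x i
        constructor
        · linarith [(abs_le.mp (h7.trans h6)).1]
        · linarith [(abs_le.mp (h7.trans h6)).2]
    -- counting bound for finite subsets of Y
    have hcount : ∀ F : Finset (EuclideanSpace ℝ (Fin n)), ↑F ⊆ Y →
        (F.card : ℝ≥0∞) * (ENNReal.ofReal ((ε/2)^n) * v) ≤
          ENNReal.ofReal (4*ε) * ENNReal.ofReal (4*ρ) ^ (n-1) := by
      intro F hF
      have hdisj : (↑F : Set (EuclideanSpace ℝ (Fin n))).PairwiseDisjoint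
          (fun y => ball y (ε/2)) := by
        intro a ha b' hb' hab
        apply ball_disjoint_ball
        have := hYsep (hF ha) (hF hb') hab
        linarith
      have hsum : ∑ y ∈ F, volume (ball y (ε/2)) = volume (⋃ y ∈ F, ball y (ε/2)) :=
        (measure_biUnion_finset hdisj fun _ _ => measurableSet_ball).symm
      have hvol : ∀ y : EuclideanSpace ℝ (Fin n),
          volume (ball y (ε/2)) = ENNReal.ofReal ((ε/2)^n) * v := by
        intro y
        rw [hv, Measure.addHaar_ball _ y (half_pos hε).le, finrank_euclideanSpace_fin]
      calc (F.card : ℝ≥0∞) * (ENNReal.ofReal ((ε/2)^n) * v)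
          = ∑ _y ∈ F, (ENNReal.ofReal ((ε/2)^n) * v) := by
            rw [Finset.sum_const, nsmul_eq_mul]
        _ = ∑ y ∈ F, volume (ball y (ε/2)) := by
            exact Finset.sum_congr rfl fun y _ => (hvol y).symm
        _ = volume (⋃ y ∈ F, ball y (ε/2)) := hsum
        _ ≤ volume ((fun w : EuclideanSpace ℝ (Fin n) =>
              (MeasurableEquiv.toLp 2 (Fin n → ℝ)).symm (bas.repr w)) ⁻¹' (univ.pi I)) := by
            refine measure_mono (iUnion₂_subset fun y hy => hballsub y (hF hy))
        _ = volume (univ.pi I) := hmp.measure_preimage hBoxMeas.nullMeasurableSet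
        _ = ENNReal.ofReal (4*ε) * ENNReal.ofReal (4*ρ) ^ (n-1) := hvolBox
    -- Y is finite
    have ha0 : ENNReal.ofReal ((ε/2)^n) * v ≠ 0 := by
      refine mul_ne_zero ?_ hv0
      simp only [ne_eq, ENNReal.ofReal_eq_zero, not_le]
      positivity
    have hat : ENNReal.ofReal ((ε/2)^n) * v ≠ ⊤ := ENNReal.mul_ne_top ENNReal.ofReal_ne_top hvt
    have hVt : ENNReal.ofReal (4*ε) * ENNReal.ofReal (4*ρ) ^ (n-1) ≠ ⊤ :=
      ENNReal.mul_ne_top ENNReal.ofReal_ne_top (ENNReal.pow_ne_top ENNReal.ofReal_ne_top)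
    have hYfin : Y.Finite := by
      by_contra hinf
      have hinf' : Y.Infinite := hinf
      obtain ⟨m, hm⟩ := ENNReal.exists_nat_gt
        (show (ENNReal.ofReal (4*ε) * ENNReal.ofReal (4*ρ) ^ (n-1)) /
            (ENNReal.ofReal ((ε/2)^n) * v) ≠ ⊤ from
          (ENNReal.div_lt_top hVt ha0).ne)
      obtain ⟨F0, hF0Y, hF0fin, hF0card⟩ := hinf'.exists_subset_ncard_eq m
      have hcard : hF0fin.toFinset.card = m := by
        rw [← hF0card, Set.ncard_eq_toFinset_card _ hF0fin]
      have h8 := hcount hF0fin.toFinset (by rw [Set.Finite.coe_toFinset]; exact hF0Y)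
      rw [hcard] at h8
      have h9 : (ENNReal.ofReal (4*ε) * ENNReal.ofReal (4*ρ) ^ (n-1)) <
          (m : ℝ≥0∞) * (ENNReal.ofReal ((ε/2)^n) * v) := by
        have h10 := (ENNReal.mul_lt_mul_iff_left ha0 hat).mpr hm
        rwa [ENNReal.div_mul_cancel ha0 hat] at h10
      exact absurd h8 (not_le.mpr h9)
    obtain ⟨N, hNdef⟩ : ∃ N : ℕ, N = hYfin.toFinset.card := ⟨_, rfl⟩
    have hNbound : (N : ℝ≥0∞) * (ENNReal.ofReal ((ε/2)^n) * v) ≤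
        ENNReal.ofReal (4*ε) * ENNReal.ofReal (4*ρ) ^ (n-1) := by
      rw [hNdef]
      exact hcount hYfin.toFinset (by rw [Set.Finite.coe_toFinset])
    -- convert the counting bound to reals
    have hNreal : (N : ℝ) * ((ε/2)^n * vr) ≤ 4*ε * (4*ρ)^(n-1) := by
      have h11 : (N : ℝ≥0∞) * (ENNReal.ofReal ((ε/2)^n) * v) =
          ENNReal.ofReal ((N : ℝ) * ((ε/2)^n * vr)) := by
        rw [hvr, ENNReal.ofReal_mul (by positivity), ENNReal.ofReal_mul (by positivity),
          ENNReal.ofReal_natCast, ENNReal.ofReal_toReal hvt]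
      have h12 : ENNReal.ofReal (4*ε) * ENNReal.ofReal (4*ρ) ^ (n-1) =
          ENNReal.ofReal (4*ε * (4*ρ)^(n-1)) := by
        rw [← ENNReal.ofReal_pow (by positivity), ← ENNReal.ofReal_mul (by positivity)]
      rw [h11, h12] at hNbound
      exact (ENNReal.ofReal_le_ofReal_iff (by positivity)).mp hNbound
    -- measure estimate
    have hμS : μ S ≤ (N : ℝ≥0∞) * ENNReal.ofReal (c₂ * ε ^ δ) := by
      have h0 : μ S ≤ μ T := by
        have hsub : S ⊆ T ∪ (measSupport μ)ᶜ := fun z hz =>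
          (em (z ∈ measSupport μ)).elim (fun h => Or.inl ⟨hz, h⟩) Or.inr
        calc μ S ≤ μ (T ∪ (measSupport μ)ᶜ) := measure_mono hsub
          _ ≤ μ T + μ (measSupport μ)ᶜ := measure_union_le _ _
          _ = μ T := by rw [measSupport_compl_null, add_zero]
      calc μ S ≤ μ T := h0
        _ ≤ μ (⋃ y ∈ hYfin.toFinset, ball y ε) := by
            refine measure_mono (hcover.trans ?_)
            intro z hz
            simp only [mem_iUnion₂] at hz ⊢
            obtain ⟨y, hy, hzy⟩ := hz
            exact ⟨y, hYfin.mem_toFinset.mpr hy, hzy⟩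
        _ ≤ ∑ y ∈ hYfin.toFinset, μ (ball y ε) := measure_biUnion_finset_le _ _
        _ ≤ ∑ _y ∈ hYfin.toFinset, ENNReal.ofReal (c₂ * ε ^ δ) := by
            refine Finset.sum_le_sum fun y hy => ?_
            have hyY : y ∈ Y := hYfin.mem_toFinset.mp hy
            have hyme : y ∈ measSupport μ := (hYT hyY).2
            exact le_trans (measure_mono ball_subset_closedBall)
              (hpl y hyme ε hε hερ₀).2
        _ = (N : ℝ≥0∞) * ENNReal.ofReal (c₂ * ε ^ δ) := by
            rw [Finset.sum_const, nsmul_eq_mul, hNdef]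
    -- real computation
    obtain ⟨m, rfl⟩ : ∃ m, n = m + 1 := ⟨n - 1, (Nat.succ_pred_eq_of_pos hn).symm⟩
    have hmn : m + 1 - 1 = m := rfl
    rw [hmn] at hNreal
    have hδγ : γ = δ - m := by rw [hγdef]; push_cast; ring
    have e1 : (ε/ρ)^γ * ρ^δ = ε^γ * ρ^(m:ℕ) := by
      rw [Real.div_rpow hε.le hρ.le, div_mul_eq_mul_div, mul_div_assoc,
        ← Real.rpow_sub hρ, show δ - γ = (m:ℝ) by rw [hδγ]; ring, Real.rpow_natCast]
    have e2 : ε^δ = ε^γ * ε^(m:ℕ) := by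
      rw [← Real.rpow_natCast ε m, ← Real.rpow_add hε]
      congr 1
      rw [hδγ]; ring
    have hεγpos : 0 < ε^γ := Real.rpow_pos_of_pos hε γ
    have hreal : (N : ℝ) * (c₂ * ε^δ) ≤ K * c₂ * ((ε/ρ)^γ * ρ^δ) := by
      have h2 : (N : ℝ) * (c₂ * ε^δ) ≤
          (4*ε*(4*ρ)^m / ((ε/2)^(m+1) * vr)) * (c₂ * ε^δ) := by
        apply mul_le_mul_of_nonneg_right _ (by positivity)
        rw [le_div_iff₀ (by positivity)]
        exact hNreal
      refine h2.trans (le_of_eq ?_)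
      rw [e1, e2, hKdef, hmn]
      rw [div_pow]
      field_simp
      ring
    have hfinal : μ S ≤ ENNReal.ofReal (K * c₂ * ((ε/ρ)^γ * ρ^δ)) := by
      refine hμS.trans ?_
      rw [← ENNReal.ofReal_natCast N, ← ENNReal.ofReal_mul (Nat.cast_nonneg N)]
      exact ENNReal.ofReal_le_ofReal hreal
    have hsplit : ENNReal.ofReal (K * c₂ * ((ε/ρ)^γ * ρ^δ)) =
        ENNReal.ofReal (K*c₂/c₁ * (ε/ρ)^γ) * ENNReal.ofReal (c₁ * ρ^δ) := by
      rw [← ENNReal.ofReal_mul (by positivity)]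
      congr 1
      field_simp
    calc μ S ≤ ENNReal.ofReal (K * c₂ * ((ε/ρ)^γ * ρ^δ)) := hfinal
      _ = ENNReal.ofReal (K*c₂/c₁ * (ε/ρ)^γ) * ENNReal.ofReal (c₁ * ρ^δ) := hsplit
      _ ≤ ENNReal.ofReal (K*c₂/c₁ * (ε/ρ)^γ) * μ (closedBall x ρ) :=
          mul_le_mul_right hB1 _
      _ < ENNReal.ofReal (C * (ε/ρ)^γ) * μ (closedBall x ρ) := by
          refine (ENNReal.mul_lt_mul_iff_left hBpos.ne' hBfin).mpr ?_
          refine (ENNReal.ofReal_lt_ofReal_iff_of_nonneg (by positivity)).mpr ?_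
          have h3 := mul_lt_mul_of_pos_right hCK hεργ
          linarith
end

section
/- Let C, γ > 0 and let α < 1/(2C^{1/γ}+1). Set ε = 1 − C(2α/(1−α))^γ, so ε ∈ (0,1). Let μ be a (C,γ)-absolutely decaying measure on ℝⁿ with support K, let 0 < ρ < ρ₀ (the decay threshold), let x₁ ∈ K, let N ∈ ℕ, and let L₁,…,L_N be affine hyperplanes in ℝⁿ. Then there exists x₂ ∈ K such that B(x₂, αρ) ⊆ B(x₁, ρ) and dist(B(x₂,αρ), L_i) > αρ for at least ⌈εN⌉ of the hyperplanes L_i. -/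
open MeasureTheory Metric Set Filter RealInnerProductSpace
open scoped ENNReal

/-- Lemma "log turns". Alice can move to avoid a fraction
`ε = 1 - C(2α/(1-α))^γ` of any `N` given hyperplanes. -/
theorem log_turns {n : ℕ}
    (μ : Measure (EuclideanSpace ℝ (Fin n))) [IsLocallyFiniteMeasure μ]
    (C γ ρ₀ : ℝ) (hC : 0 < C) (hγ : 0 < γ) (hρ₀ : 0 < ρ₀)
    (hμ : AbsolutelyDecaying μ C γ ρ₀)
    (α : ℝ) (hα : 0 < α) (hα' : α < 1 / (2 * C ^ (1/γ) + 1))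
    (ε : ℝ) (hε : ε = 1 - C * (2 * α / (1 - α)) ^ γ)
    (ρ : ℝ) (hρ : 0 < ρ) (hρ' : ρ < ρ₀)
    (x₁ : EuclideanSpace ℝ (Fin n)) (hx₁ : x₁ ∈ measSupport μ)
    (N : ℕ) (L : Fin N → Set (EuclideanSpace ℝ (Fin n)))
    (hL : ∀ i, IsAffineHyperplane (L i)) :
    ε ∈ Set.Ioo (0:ℝ) 1 ∧
    ∃ x₂ ∈ measSupport μ,
      closedBall x₂ (α * ρ) ⊆ closedBall x₁ ρ ∧
      ∃ S : Finset (Fin N), (⌈ε * N⌉ : ℤ) ≤ S.card ∧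
        ∀ i ∈ S, closedBall x₂ (α * ρ) ∩ cthickening (α * ρ) (L i) = ∅ := by
  classical
  have hD : (0:ℝ) < C ^ (1/γ) := Real.rpow_pos_of_pos hC _
  have hα1 : α < 1 := by
    have h1 : 1 / (2 * C ^ (1/γ) + 1) < 1 := by
      rw [div_lt_one (by linarith)]; linarith
    linarith
  have h1α : (0:ℝ) < 1 - α := by linarith
  have hβ : (0:ℝ) < 2 * α / (1 - α) := by positivity
  have hkey : (2 * α / (1 - α)) * C ^ (1/γ) < 1 := by
    rw [div_mul_eq_mul_div, div_lt_one h1α]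
    have h2 := (lt_div_iff₀ (by linarith : (0:ℝ) < 2 * C ^ (1/γ) + 1)).mp hα'
    nlinarith
  have hCg : (C ^ (1/γ)) ^ γ = C := by
    rw [← Real.rpow_mul hC.le, one_div, inv_mul_cancel₀ hγ.ne', Real.rpow_one]
  have hCβ : C * (2 * α / (1 - α)) ^ γ < 1 := by
    have h1 : ((2 * α / (1 - α)) * C ^ (1/γ)) ^ γ < 1 :=
      Real.rpow_lt_one (by positivity) hkey hγ
    rwa [Real.mul_rpow hβ.le hD.le, hCg, mul_comm] at h1
  have hCβ0 : 0 < C * (2 * α / (1 - α)) ^ γ := by positivity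
  have hεIoo : ε ∈ Set.Ioo (0:ℝ) 1 := ⟨by rw [hε]; linarith, by rw [hε]; linarith⟩
  refine ⟨hεIoo, ?_⟩
  set r := (1 - α) * ρ with hr_def
  have hr : 0 < r := by positivity
  set B := closedBall x₁ r with hB
  set bad : Fin N → Set (EuclideanSpace ℝ (Fin n)) :=
    fun i => cthickening (2 * α * ρ) (L i) with hbad
  have hbadm : ∀ i, MeasurableSet (bad i) := fun i =>
    (isClosed_cthickening).measurableSet
  have hratio : ∀ i, μ (B ∩ bad i) < ENNReal.ofReal (1 - ε) * μ B := by
    intro i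
    have hrρ₀ : r < ρ₀ := by nlinarith
    have h2 := hμ (L i) (hL i) x₁ hx₁ r hr hrρ₀ (2 * α * ρ) (by positivity)
    have h3 : C * ((2 * α * ρ) / r) ^ γ = 1 - ε := by
      have h4 : (2 * α * ρ) / r = 2 * α / (1 - α) := by
        rw [hr_def]; field_simp
      rw [h4, hε]; ring
    rwa [h3] at h2
  have hμB0 : μ B ≠ 0 := by
    have h1 : 0 < μ (ball x₁ r) := hx₁ r hr
    exact (lt_of_lt_of_le h1 (measure_mono ball_subset_closedBall)).ne'
  have hμBtop : μ B ≠ ⊤ := measure_closedBall_lt_top.ne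
  have hnull : μ (measSupport μ)ᶜ = 0 := by
    apply measure_null_of_locally_null
    intro x hx
    simp only [measSupport, mem_compl_iff, mem_setOf_eq, not_forall, not_lt,
      nonpos_iff_eq_zero] at hx
    obtain ⟨ρ', hρ', hz⟩ := hx
    exact ⟨ball x ρ', mem_nhdsWithin_of_mem_nhds (ball_mem_nhds x hρ'), hz⟩
  by_cases hm : ⌈ε * N⌉ ≤ 0
  · refine ⟨x₁, hx₁, closedBall_subset_closedBall (by nlinarith), ∅, by simpa using hm,
      by simp⟩
  · push_neg at hm
    set m' : ℕ := (⌈ε * (N:ℝ)⌉).toNat with hm'_def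
    have hm'' : (m' : ℤ) = ⌈ε * (N:ℝ)⌉ := Int.toNat_of_nonneg (by omega)
    have hm'1 : 1 ≤ m' := by omega
    have hm'N : m' ≤ N := by
      have h1 : ⌈ε * (N:ℝ)⌉ ≤ (N:ℤ) := Int.ceil_le.mpr (by
        have : ε * N ≤ 1 * N := by
          apply mul_le_mul_of_nonneg_right hεIoo.2.le (Nat.cast_nonneg N)
        simpa using this)
      omega
    by_contra hcon
    push_neg at hcon
    have hgeom : ∀ (x : EuclideanSpace ℝ (Fin n)) i, x ∉ bad i →
        closedBall x (α * ρ) ∩ cthickening (α * ρ) (L i) = ∅ := by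
      intro x i hx
      rw [eq_empty_iff_forall_notMem]
      rintro y ⟨hy1, hy2⟩
      apply hx
      rw [hbad]
      rw [Metric.mem_cthickening_iff]
      calc EMetric.infEdist x (L i) ≤ edist x y + EMetric.infEdist y (L i) :=
            EMetric.infEdist_le_edist_add_infEdist
        _ ≤ ENNReal.ofReal (α * ρ) + ENNReal.ofReal (α * ρ) := by
            apply add_le_add
            · rw [edist_dist, dist_comm]
              exact ENNReal.ofReal_le_ofReal (mem_closedBall.mp hy1)
            · exact Metric.mem_cthickening_iff.mp hy2
        _ = ENNReal.ofReal (2 * α * ρ) := by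
            rw [← ENNReal.ofReal_add (by positivity) (by positivity)]; ring_nf
    have hcount : ∀ x ∈ B ∩ measSupport μ,
        (N - m' + 1 : ℕ) ≤ (Finset.univ.filter (fun i => x ∈ bad i)).card := by
      rintro x ⟨hxB, hxP⟩
      set S := Finset.univ.filter
        (fun i => closedBall x (α * ρ) ∩ cthickening (α * ρ) (L i) = ∅) with hS
      have hsub : closedBall x (α * ρ) ⊆ closedBall x₁ ρ := by
        intro y hy
        have h1 : dist x x₁ ≤ r := mem_closedBall.mp hxB
        have h2 : dist y x ≤ α * ρ := mem_closedBall.mp hy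
        have h3 : dist y x₁ ≤ dist y x + dist x x₁ := dist_triangle _ _ _
        rw [mem_closedBall]
        rw [hr_def] at h1
        nlinarith
      have hScard : ¬ ((⌈ε * (N:ℝ)⌉ : ℤ) ≤ S.card) := by
        intro hle
        obtain ⟨i, hiS, hne⟩ := hcon x hxP hsub S hle
        rw [(Finset.mem_filter.mp hiS).2] at hne
        exact Set.not_nonempty_empty hne
      have h2 : S.card < m' := by omega
      have hsub2 : Finset.univ.filter (fun i => x ∉ bad i) ⊆ S := by
        intro i hi
        rw [Finset.mem_filter] at hi ⊢
        exact ⟨Finset.mem_univ i, hgeom x i hi.2⟩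
      have h3 := Finset.card_le_card hsub2
      have h4 : (Finset.univ.filter (fun i => x ∈ bad i)).card
          + (Finset.univ.filter (fun i => ¬ x ∈ bad i)).card = N := by
        rw [Finset.card_filter_add_card_filter_not]
        simp
      omega
    have haeB : ∀ᵐ x ∂(μ.restrict B), ((N - m' + 1 : ℕ) : ℝ≥0∞) ≤
        ∑ i, (bad i).indicator (fun _ => (1:ℝ≥0∞)) x := by
      have h1 : ∀ᵐ x ∂μ, x ∈ measSupport μ := by
        rw [MeasureTheory.ae_iff]
        exact hnull
      rw [ae_restrict_iff' measurableSet_closedBall]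
      filter_upwards [h1] with x hxP hxB
      have hc := hcount x ⟨hxB, hxP⟩
      calc ((N - m' + 1 : ℕ) : ℝ≥0∞)
          ≤ ((Finset.univ.filter (fun i => x ∈ bad i)).card : ℝ≥0∞) := by
            exact_mod_cast hc
        _ = ∑ i ∈ Finset.univ.filter (fun i => x ∈ bad i),
              (bad i).indicator (fun _ => (1:ℝ≥0∞)) x := by
            rw [Finset.sum_congr rfl
              (fun i hi => Set.indicator_of_mem (Finset.mem_filter.mp hi).2 _)]
            simp
        _ ≤ ∑ i, (bad i).indicator (fun _ => (1:ℝ≥0∞)) x :=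
            Finset.sum_le_sum_of_subset (Finset.filter_subset _ _)
    have hint : ((N - m' + 1 : ℕ) : ℝ≥0∞) * μ B ≤ ∑ i, μ (bad i ∩ B) := by
      calc ((N - m' + 1 : ℕ) : ℝ≥0∞) * μ B
          = ∫⁻ _ in B, ((N - m' + 1 : ℕ) : ℝ≥0∞) ∂μ := (setLIntegral_const _ _).symm
        _ ≤ ∫⁻ x in B, ∑ i, (bad i).indicator (fun _ => (1:ℝ≥0∞)) x ∂μ :=
            lintegral_mono_ae haeB
        _ = ∑ i, ∫⁻ x in B, (bad i).indicator (fun _ => (1:ℝ≥0∞)) x ∂μ :=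
            lintegral_finset_sum _ (fun i _ => measurable_const.indicator (hbadm i))
        _ = ∑ i, μ (bad i ∩ B) := by
            refine Finset.sum_congr rfl (fun i _ => ?_)
            rw [lintegral_indicator (hbadm i), setLIntegral_one,
              Measure.restrict_apply (hbadm i)]
    have hsum : ∑ i, μ (bad i ∩ B) ≤ (N : ℝ≥0∞) * (ENNReal.ofReal (1 - ε) * μ B) := by
      calc ∑ i, μ (bad i ∩ B) ≤ ∑ _i : Fin N, ENNReal.ofReal (1 - ε) * μ B :=
            Finset.sum_le_sum (fun i _ => by rw [inter_comm]; exact (hratio i).le)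
        _ = (N : ℝ≥0∞) * (ENNReal.ofReal (1 - ε) * μ B) := by
            rw [Finset.sum_const, Finset.card_univ, Fintype.card_fin, nsmul_eq_mul]
    have hreal : (N:ℝ) * (1 - ε) < ((N - m' + 1 : ℕ) : ℝ) := by
      have h1 : (⌈ε * (N:ℝ)⌉ : ℝ) < ε * N + 1 := Int.ceil_lt_add_one _
      have h2 : ((m' : ℤ) : ℝ) = (⌈ε * (N:ℝ)⌉ : ℝ) := by exact_mod_cast hm''
      have h3 : ((N - m' + 1 : ℕ) : ℝ) = (N:ℝ) - (m':ℝ) + 1 := by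
        push_cast [Nat.cast_sub hm'N]; ring
      rw [h3]
      have h4 : (m' : ℝ) < ε * N + 1 := by rw [← h2] at h1; exact_mod_cast h1
      nlinarith
    have hfin : (N : ℝ≥0∞) * (ENNReal.ofReal (1 - ε) * μ B)
        < ((N - m' + 1 : ℕ) : ℝ≥0∞) * μ B := by
      rw [← mul_assoc]
      rw [ENNReal.mul_lt_mul_iff_left hμB0 hμBtop]
      have h1 : (N : ℝ≥0∞) * ENNReal.ofReal (1 - ε) = ENNReal.ofReal ((N:ℝ) * (1 - ε)) := by
        rw [ENNReal.ofReal_mul (Nat.cast_nonneg N), ENNReal.ofReal_natCast]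
      have h2 : ((N - m' + 1 : ℕ) : ℝ≥0∞) = ENNReal.ofReal (((N - m' + 1 : ℕ) : ℝ)) := by
        rw [ENNReal.ofReal_natCast]
      rw [h1, h2]
      exact (ENNReal.ofReal_lt_ofReal_iff (by positivity)).mpr hreal
    exact absurd (hint.trans hsum) (not_le.mpr hfin)
end

section
/- Let μ be a (C,γ)-absolutely decaying measure on ℝⁿ with threshold ρ₀, let 0 < α < 1/(2C^{1/γ}+1), let 0 < ρ < ρ₀, let x₁ ∈ supp μ, and let L be an affine hyperplane in ℝⁿ. Then there exists x₂ ∈ supp μ with B(x₂, αρ) ⊆ B(x₁, ρ) and dist(B(x₂, αρ), L) > αρ; in particular B(x₂,αρ) is disjoint from L. -/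
open MeasureTheory Metric Set Filter RealInnerProductSpace

lemma compl_measSupport_null {n : ℕ} (μ : Measure (EuclideanSpace ℝ (Fin n))) :
    μ (measSupport μ)ᶜ = 0 := by
  apply measure_null_of_locally_null
  intro x hx
  simp only [measSupport, mem_compl_iff, mem_setOf_eq, not_forall] at hx
  obtain ⟨r, hr, hr0⟩ := hx
  push_neg at hr0
  exact ⟨ball x r, mem_nhdsWithin_of_mem_nhds (ball_mem_nhds x hr),
    le_antisymm hr0 zero_le⟩

/-- escaping one hyperplane. -/
theorem escape_one_hyperplane {n : ℕ}
    (μ : Measure (EuclideanSpace ℝ (Fin n))) [IsLocallyFiniteMeasure μ]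
    (C γ ρ₀ : ℝ) (hC : 0 < C) (hγ : 0 < γ) (hρ₀ : 0 < ρ₀)
    (hμ : AbsolutelyDecaying μ C γ ρ₀)
    (α : ℝ) (hα : 0 < α) (hα' : α < 1 / (2 * C ^ (1/γ) + 1))
    (ρ : ℝ) (hρ : 0 < ρ) (hρ' : ρ < ρ₀)
    (x₁ : EuclideanSpace ℝ (Fin n)) (hx₁ : x₁ ∈ measSupport μ)
    (L : Set (EuclideanSpace ℝ (Fin n))) (hL : IsAffineHyperplane L) :
    ∃ x₂ ∈ measSupport μ,
      closedBall x₂ (α * ρ) ⊆ closedBall x₁ ρ ∧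
      closedBall x₂ (α * ρ) ∩ cthickening (α * ρ) L = ∅ ∧
      closedBall x₂ (α * ρ) ∩ L = ∅ := by
  have hD : 0 < C ^ (1/γ) := Real.rpow_pos_of_pos hC _
  have hden : (1:ℝ) < 2 * C ^ (1/γ) + 1 := by linarith
  have hα1 : α < 1 := lt_trans hα' (by rw [div_lt_one (by linarith)]; exact hden)
  -- key numeric inequality
  have hkey : C * (2 * α / (1 - α)) ^ γ < 1 := by
    have h1 : α * (2 * C ^ (1/γ) + 1) < 1 := by
      rw [lt_div_iff₀ (by linarith)] at hα'; linarith
    have h2 : 2 * α / (1 - α) < (C ^ (1/γ))⁻¹ := by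
      rw [div_lt_iff₀ (by linarith), inv_mul_eq_div, lt_div_iff₀ hD]
      nlinarith
    have h3 : (2 * α / (1 - α)) ^ γ < ((C ^ (1/γ))⁻¹) ^ γ :=
      Real.rpow_lt_rpow (div_nonneg (by linarith) (by linarith)) h2 hγ
    have h4 : ((C ^ (1/γ))⁻¹ : ℝ) ^ γ = C⁻¹ := by
      rw [Real.inv_rpow hD.le, ← Real.rpow_mul hC.le,
        one_div_mul_cancel hγ.ne', Real.rpow_one]
    rw [h4] at h3
    calc C * (2 * α / (1 - α)) ^ γ < C * C⁻¹ := (mul_lt_mul_iff_right₀ hC).mpr h3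
    _ = 1 := mul_inv_cancel₀ hC.ne'
  set r : ℝ := (1 - α) * ρ with hrdef
  have hr : 0 < r := mul_pos (by linarith) hρ
  have hrρ : r ≤ ρ := by nlinarith
  have hε : 0 < 2 * α * ρ := by positivity
  have hratio : (2 * α * ρ) / r = 2 * α / (1 - α) := by
    have h1 : (1:ℝ) - α ≠ 0 := by linarith
    rw [hrdef]; field_simp
  have hlt := hμ L hL x₁ hx₁ r hr (lt_of_le_of_lt hrρ hρ') (2 * α * ρ) hε
  rw [hratio] at hlt
  have hBt : μ (closedBall x₁ r) < ⊤ := (isCompact_closedBall x₁ r).measure_lt_top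
  have hlt2 : μ (closedBall x₁ r ∩ cthickening (2 * α * ρ) L) < μ (closedBall x₁ r) := by
    calc μ (closedBall x₁ r ∩ cthickening (2 * α * ρ) L)
        < ENNReal.ofReal (C * (2 * α / (1 - α)) ^ γ) * μ (closedBall x₁ r) := hlt
      _ ≤ 1 * μ (closedBall x₁ r) :=
        mul_le_mul_left (ENNReal.ofReal_le_one.mpr hkey.le) _
      _ = μ (closedBall x₁ r) := one_mul _
  have hex : ∃ x₂, x₂ ∈ measSupport μ ∧ x₂ ∈ closedBall x₁ r ∧
      x₂ ∉ cthickening (2 * α * ρ) L := by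
    by_contra h
    push_neg at h
    have hsub : closedBall x₁ r ⊆
        (closedBall x₁ r ∩ cthickening (2 * α * ρ) L) ∪ (measSupport μ)ᶜ := by
      intro y hy
      by_cases hy2 : y ∈ measSupport μ
      · exact Or.inl ⟨hy, h y hy2 hy⟩
      · exact Or.inr hy2
    have hle : μ (closedBall x₁ r) ≤
        μ (closedBall x₁ r ∩ cthickening (2 * α * ρ) L) := by
      calc μ (closedBall x₁ r) ≤
          μ ((closedBall x₁ r ∩ cthickening (2 * α * ρ) L) ∪ (measSupport μ)ᶜ) :=
            measure_mono hsub
        _ ≤ μ (closedBall x₁ r ∩ cthickening (2 * α * ρ) L) + μ (measSupport μ)ᶜ :=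
            measure_union_le _ _
        _ = μ (closedBall x₁ r ∩ cthickening (2 * α * ρ) L) := by
            rw [compl_measSupport_null, add_zero]
    exact absurd hle (not_le.mpr hlt2)
  obtain ⟨x₂, hx₂s, hx₂b, hx₂t⟩ := hex
  have hdb : dist x₂ x₁ ≤ r := mem_closedBall.mp hx₂b
  have hdisj : closedBall x₂ (α * ρ) ∩ cthickening (α * ρ) L = ∅ := by
    rw [eq_empty_iff_forall_notMem]
    rintro y ⟨hy1, hy2⟩
    apply hx₂t
    have h1 : EMetric.infEdist x₂ L ≤ EMetric.infEdist y L + edist x₂ y :=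
      EMetric.infEdist_le_infEdist_add_edist
    have h2 : EMetric.infEdist y L ≤ ENNReal.ofReal (α * ρ) := hy2
    have h3 : edist x₂ y ≤ ENNReal.ofReal (α * ρ) := by
      rw [edist_dist]
      exact ENNReal.ofReal_le_ofReal (by rw [dist_comm]; exact mem_closedBall.mp hy1)
    show EMetric.infEdist x₂ L ≤ ENNReal.ofReal (2 * α * ρ)
    calc EMetric.infEdist x₂ L ≤ EMetric.infEdist y L + edist x₂ y := h1
      _ ≤ ENNReal.ofReal (α * ρ) + ENNReal.ofReal (α * ρ) := add_le_add h2 h3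
      _ = ENNReal.ofReal (2 * α * ρ) := by
          rw [← ENNReal.ofReal_add (by positivity) (by positivity)]; ring_nf
  refine ⟨x₂, hx₂s, ?_, hdisj, ?_⟩
  · apply closedBall_subset_closedBall'
    rw [hrdef] at hdb; nlinarith
  · exact subset_eq_empty (hdisj ▸ inter_subset_inter_right _
      (self_subset_cthickening _)) rfl
end

section
/- Let M be an m×n real matrix with operator norm t = ‖M‖_op > 0, and let v be a unit vector in ℝⁿ with ‖Mv‖ = t. Let V ⊂ ℝᵐ be the hyperplane through 0 perpendicular to Mv, and let W = M⁻¹(V) ⊆ ℝⁿ. Then for any c > 0, the preimage M⁻¹(B(0,c)) of the closed ball of radius c around 0 is contained in the closed (c/t)-neighborhood of W. -/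
open MeasureTheory Metric Set Filter RealInnerProductSpace

/-- the preimage of a small ball under a linear map `M` is contained
in a thin neighborhood of the hyperplane `W = M⁻¹(V)`, where `V ⊥ Mv` and `v`
realizes the operator norm. -/
theorem preimage_ball_subset_cthickening {m n : ℕ}
    (M : EuclideanSpace ℝ (Fin n) →L[ℝ] EuclideanSpace ℝ (Fin m))
    (t : ℝ) (ht : t = ‖M‖) (htpos : 0 < t)
    (v : EuclideanSpace ℝ (Fin n)) (hv : ‖v‖ = 1) (hMv : ‖M v‖ = t)
    (V : Set (EuclideanSpace ℝ (Fin m))) (hV : V = {y | ⟪M v, y⟫ = 0})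
    (W : Set (EuclideanSpace ℝ (Fin n))) (hW : W = M ⁻¹' V)
    (c : ℝ) (hc : 0 < c) :
    M ⁻¹' closedBall 0 c ⊆ cthickening (c / t) W := by
  intro x hx
  simp only [mem_preimage, mem_closedBall, dist_zero_right] at hx
  set η : ℝ := ⟪M v, M x⟫ / t ^ 2 with hη
  set w : EuclideanSpace ℝ (Fin n) := x - η • v with hw
  have hwW : w ∈ W := by
    rw [hW, mem_preimage, hV]
    show ⟪M v, M w⟫ = 0
    have : M w = M x - η • M v := by rw [hw, map_sub, _root_.map_smul]
    rw [this, inner_sub_right, real_inner_smul_right, real_inner_self_eq_norm_sq, hMv, hη]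
    field_simp
    ring
  have hdist : dist x w ≤ c / t := by
    have : dist x w = |η| := by
      rw [dist_eq_norm, hw]
      simp [norm_smul, hv, abs_eq_self]
    rw [this]
    have hCS : |⟪M v, M x⟫| ≤ t * c := by
      calc |⟪M v, M x⟫| ≤ ‖M v‖ * ‖M x‖ := abs_real_inner_le_norm _ _
        _ ≤ t * c := by rw [hMv]; exact mul_le_mul_of_nonneg_left hx htpos.le
    rw [hη, abs_div, abs_of_pos (by positivity : (0:ℝ) < t ^ 2), div_le_div_iff₀ (by positivity) htpos]
    calc |⟪M v, M x⟫| * t ≤ (t * c) * t := by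
          exact mul_le_mul_of_nonneg_right hCS htpos.le
      _ = c * t ^ 2 := by ring
  exact mem_cthickening_of_dist_le x w _ _ hwW hdist
end
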